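/- Let α₁ < α₂ < α₃ be real, a > 0, and let V ⊆ {x ∈ ℝ³ : x₁x₂x₃ ≠ 0} be open. Suppose u₁, u₂ : V → ℝ are continuously differentiable with α₁ < u₁(x) < α₂ < u₂(x) < α₃ and Σ_{j=1}^{3} x_j²/(u_i(x) − α_j) = 0 on V for i = 1, 2. Define π_i⁰(x, J) = (1/(2a²)) Σ_{j=1}^{3} x_j (x ∧ J)_j / (u_i(x) − α_j) on V × ℝ³. Then, viewing u₁, u₂ also as functions on V × ℝ³ independent of J, the e(3) Lie-Poisson bracket satisfies {u₁, u₂} = 0 everywhere on V × ℝ³, and {π_i⁰, u_j} = δ_{ij} at every point (x, J) ∈ V × ℝ³ with |x|² = a². -/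

import Mathlib

/-- Points of `e*(3)`: the first component is `x`, the second is `J`. -/
abbrev E3 : Type := (Fin 3 → ℝ) × (Fin 3 → ℝ)

/-- The totally antisymmetric symbol `ε_{ijk}` with `ε_{012} = 1`. -/
noncomputable def eps (i j k : Fin 3) : ℝ :=
  (((j : ℕ) : ℝ) - ((i : ℕ) : ℝ)) * (((k : ℕ) : ℝ) - ((j : ℕ) : ℝ)) *
    (((k : ℕ) : ℝ) - ((i : ℕ) : ℝ)) / 2

/-- Partial derivative in the `x`-variable: `∂F/∂x_i`. -/
noncomputable def dX (F : E3 → ℝ) (i : Fin 3) (p : E3) : ℝ :=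
  fderiv ℝ F p (Pi.single i 1, 0)

/-- Partial derivative in the `J`-variable: `∂F/∂J_i`. -/
noncomputable def dJ (F : E3 → ℝ) (i : Fin 3) (p : E3) : ℝ :=
  fderiv ℝ F p (0, Pi.single i 1)

/-- The Lie–Poisson bracket on `e*(3)`. -/
noncomputable def liePoisson (F G : E3 → ℝ) (p : E3) : ℝ :=
  ∑ i, ∑ j, ∑ k, eps i j k *
    (p.2 k * dJ F i p * dJ G j p + p.1 k * dJ F i p * dX G j p +
      p.1 k * dX F i p * dJ G j p)

/-- The standard euclidean cross product in `ℝ³`. -/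
def cross (u v : Fin 3 → ℝ) : Fin 3 → ℝ :=
  ![u 1 * v 2 - u 2 * v 1, u 2 * v 0 - u 0 * v 2, u 0 * v 1 - u 1 * v 0]

/-- The momentum `π_i⁰(x,J) = (1/(2a²)) Σ_j x_j (x ∧ J)_j/(u_i(x) − α_j)`. -/
noncomputable def pi0 (α : Fin 3 → ℝ) (a : ℝ) (u : (Fin 3 → ℝ) → ℝ)
    (p : E3) : ℝ :=
  (1 / (2 * a ^ 2)) * ∑ j, p.1 j * cross p.1 p.2 j / (u p.1 - α j)

/-! ### Auxiliary lemmas -/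

lemma cross_eq3 (u v : Fin 3 → ℝ) (m : Fin 3) :
    cross u v m = u (m + 1) * v (m + 2) - u (m + 2) * v (m + 1) := by
  fin_cases m <;> simp [cross]

lemma hasFDerivAt_div'' {E : Type*} [NormedAddCommGroup E] [NormedSpace ℝ E]
    {F D : E → ℝ} {F' D' : E →L[ℝ] ℝ} {x : E}
    (hF : HasFDerivAt F F' x) (hD : HasFDerivAt D D' x) (h : D x ≠ 0) :
    HasFDerivAt (fun y => F y / D y)
      ((D x)⁻¹ • F' - (F x / D x ^ 2) • D') x := by
  have h1 : HasFDerivAt (fun y => (D y)⁻¹)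
      ((-((D x)⁻¹ * (D x)⁻¹)) • D') x := by
    have h2 := (hasFDerivAt_inv' (𝕜 := ℝ) h).comp x hD
    refine h2.congr_fderiv ?_
    ext v
    simp [ContinuousLinearMap.mulLeftRight_apply]
    ring
  have h2 := hF.mul h1
  have heq : (fun y => F y / D y) = fun y => F y * (D y)⁻¹ := by
    funext y; rw [div_eq_mul_inv]
  rw [heq]
  refine h2.congr_fderiv ?_
  ext v
  simp
  field_simp
  ring

noncomputable abbrev Pr (n : Fin 3) : (Fin 3 → ℝ) →L[ℝ] ℝ := ContinuousLinearMap.proj n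

noncomputable abbrev eX (n : Fin 3) : E3 →L[ℝ] ℝ :=
  (Pr n).comp (ContinuousLinearMap.fst ℝ (Fin 3 → ℝ) (Fin 3 → ℝ))

noncomputable abbrev eJ (n : Fin 3) : E3 →L[ℝ] ℝ :=
  (Pr n).comp (ContinuousLinearMap.snd ℝ (Fin 3 → ℝ) (Fin 3 → ℝ))

lemma hasFDerivAt_fstComp (f : (Fin 3 → ℝ) → ℝ) (p : E3)
    (hf : DifferentiableAt ℝ f p.1) :
    HasFDerivAt (fun q : E3 => f q.1)
      ((fderiv ℝ f p.1).comp (ContinuousLinearMap.fst ℝ (Fin 3 → ℝ) (Fin 3 → ℝ))) p :=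
  hf.hasFDerivAt.comp p hasFDerivAt_fst

lemma dJ_fstComp (f : (Fin 3 → ℝ) → ℝ) (p : E3)
    (hf : DifferentiableAt ℝ f p.1) (i : Fin 3) :
    dJ (fun q : E3 => f q.1) i p = 0 := by
  rw [dJ, (hasFDerivAt_fstComp f p hf).fderiv]
  simp

lemma dX_fstComp (f : (Fin 3 → ℝ) → ℝ) (p : E3)
    (hf : DifferentiableAt ℝ f p.1) (i : Fin 3) :
    dX (fun q : E3 => f q.1) i p = fderiv ℝ f p.1 (Pi.single i 1) := by
  rw [dX, (hasFDerivAt_fstComp f p hf).fderiv]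
  simp

lemma implicit_rel (α : Fin 3 → ℝ) (V : Set (Fin 3 → ℝ)) (hV : IsOpen V)
    (f : (Fin 3 → ℝ) → ℝ) (x : Fin 3 → ℝ) (hx : x ∈ V)
    (hf : DifferentiableAt ℝ f x)
    (hne : ∀ m, f x - α m ≠ 0)
    (hroot : ∀ y ∈ V, ∑ n, (y n) ^ 2 / (f y - α n) = 0) (m : Fin 3) :
    2 * x m / (f x - α m)
      = fderiv ℝ f x (Pi.single m 1) * ∑ n, (x n) ^ 2 / (f x - α n) ^ 2 := by
  have hproj : ∀ n : Fin 3, HasFDerivAt (fun y : Fin 3 → ℝ => y n)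
      (Pr n) x := fun n => (Pr n).hasFDerivAt
  have hsq : ∀ n : Fin 3, HasFDerivAt (fun y : Fin 3 → ℝ => (y n) ^ 2)
      (x n • Pr n + x n • Pr n) x := by
    intro n
    have h := (hproj n).mul (hproj n)
    simp only [← pow_two] at h
    exact h
  have hden : ∀ n : Fin 3, HasFDerivAt (fun y => f y - α n) (fderiv ℝ f x) x :=
    fun n => hf.hasFDerivAt.sub_const (α n)
  have hterm := fun n : Fin 3 => hasFDerivAt_div'' (hsq n) (hden n) (hne n)
  have hg : HasFDerivAt (fun y => ∑ n, (y n) ^ 2 / (f y - α n))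
      (∑ n, ((f x - α n)⁻¹ •
          (x n • Pr n + x n • Pr n) -
        ((x n) ^ 2 / (f x - α n) ^ 2) • fderiv ℝ f x)) x :=
    HasFDerivAt.fun_sum fun n _ => hterm n
  have hev : (fun y => ∑ n, (y n) ^ 2 / (f y - α n)) =ᶠ[nhds x] fun _ => (0 : ℝ) := by
    filter_upwards [hV.mem_nhds hx] with y hy
    exact hroot y hy
  have hzero : fderiv ℝ (fun y => ∑ n, (y n) ^ 2 / (f y - α n)) x = 0 := by
    rw [hev.fderiv_eq]; simp
  have hsum0 := hg.fderiv.symm.trans hzero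
  have happ := congrArg (fun L : (Fin 3 → ℝ) →L[ℝ] ℝ => L (Pi.single m 1)) hsum0
  simp only [ContinuousLinearMap.sum_apply, ContinuousLinearMap.sub_apply,
    ContinuousLinearMap.smul_apply, ContinuousLinearMap.add_apply,
    ContinuousLinearMap.proj_apply, ContinuousLinearMap.zero_apply,
    Pi.single_apply, smul_eq_mul] at happ
  rw [Fin.sum_univ_three] at happ
  rw [Fin.sum_univ_three]
  fin_cases m <;>
  · simp only [Fin.zero_eta, Fin.mk_one, show (⟨2, by norm_num⟩ : Fin 3) = 2 from rfl] at happ ⊢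
    simp at happ
    have h0 := hne 0; have h1 := hne 1; have h2 := hne 2
    field_simp at happ ⊢
    linear_combination happ

lemma dJ_pi0 (α : Fin 3 → ℝ) (a : ℝ) (f : (Fin 3 → ℝ) → ℝ) (p : E3)
    (hf : DifferentiableAt ℝ f p.1) (hne : ∀ m, f p.1 - α m ≠ 0) (l : Fin 3) :
    dJ (pi0 α a f) l p =
      (1 / (2 * a ^ 2)) * ∑ m, p.1 m * cross p.1 (Pi.single l 1) m / (f p.1 - α m) := by
  have hX : ∀ k : Fin 3, HasFDerivAt (fun q : E3 => q.1 k) (eX k) p := fun k =>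
    (eX k).hasFDerivAt
  have hJ : ∀ k : Fin 3, HasFDerivAt (fun q : E3 => q.2 k) (eJ k) p := fun k =>
    (eJ k).hasFDerivAt
  have hcross : ∀ m : Fin 3, HasFDerivAt (fun q : E3 => cross q.1 q.2 m)
      (p.1 (m + 1) • eJ (m + 2) + p.2 (m + 2) • eX (m + 1) -
        (p.1 (m + 2) • eJ (m + 1) + p.2 (m + 1) • eX (m + 2))) p := by
    intro m
    have h := ((hX (m + 1)).mul (hJ (m + 2))).sub ((hX (m + 2)).mul (hJ (m + 1)))
    have heq : (fun q : E3 => cross q.1 q.2 m) =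
        fun q : E3 => q.1 (m + 1) * q.2 (m + 2) - q.1 (m + 2) * q.2 (m + 1) :=
      funext fun q => cross_eq3 _ _ m
    rw [heq]; exact h
  have hnum := fun m : Fin 3 => (hX m).mul (hcross m)
  have hden : ∀ m : Fin 3, HasFDerivAt (fun q : E3 => f q.1 - α m)
      ((fderiv ℝ f p.1).comp (ContinuousLinearMap.fst ℝ (Fin 3 → ℝ) (Fin 3 → ℝ))) p :=
    fun m => (hasFDerivAt_fstComp f p hf).sub_const (α m)
  have hterm := fun m : Fin 3 => hasFDerivAt_div'' (hnum m) (hden m) (hne m)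
  have hsum := HasFDerivAt.sum (u := Finset.univ) fun m _ => hterm m
  have hpi := hsum.const_mul (1 / (2 * a ^ 2))
  have hpi' : HasFDerivAt (pi0 α a f) _ p := hpi
  rw [dJ, hpi'.fderiv]
  simp
  refine Or.inl (Finset.sum_congr rfl fun m _ => ?_)
  rw [cross_eq3, div_eq_mul_inv]
  ring

set_option maxHeartbeats 1000000 in
lemma main_aux (α : Fin 3 → ℝ) (a : ℝ) (ha : a ≠ 0)
    (V : Set (Fin 3 → ℝ)) (hV : IsOpen V)
    (ui uj : (Fin 3 → ℝ) → ℝ) (p : E3) (hx : p.1 ∈ V)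
    (hui : DifferentiableAt ℝ ui p.1) (huj : DifferentiableAt ℝ uj p.1)
    (hbne : ∀ m, ui p.1 - α m ≠ 0) (hcne : ∀ m, uj p.1 - α m ≠ 0)
    (hxne : ∀ m, p.1 m ≠ 0)
    (hrooti : ∑ n, (p.1 n) ^ 2 / (ui p.1 - α n) = 0)
    (hrootj : ∀ y ∈ V, ∑ n, (y n) ^ 2 / (uj y - α n) = 0)
    (hsph : ∑ m, (p.1 m) ^ 2 = a ^ 2) :
    liePoisson (pi0 α a ui) (fun q => uj q.1) p =
      if ui p.1 = uj p.1 then 1 else 0 := by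
  have hdJu := dJ_fstComp uj p huj
  have hdXu := dX_fstComp uj p huj
  have hdJpi := dJ_pi0 α a ui p hui hbne
  have himp := fun m => implicit_rel α V hV uj p.1 hx huj hcne hrootj m
  have hrb := hrooti
  have hrc := hrootj p.1 hx
  have hsph' := hsph
  rw [Fin.sum_univ_three] at hrb hrc hsph'
  simp only [Fin.sum_univ_three] at himp
  -- replace the shifted eigenvalues by opaque atoms
  obtain ⟨b0, hb0d⟩ : ∃ t : ℝ, ui p.1 - α 0 = t := ⟨_, rfl⟩
  obtain ⟨b1, hb1d⟩ : ∃ t : ℝ, ui p.1 - α 1 = t := ⟨_, rfl⟩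
  obtain ⟨b2, hb2d⟩ : ∃ t : ℝ, ui p.1 - α 2 = t := ⟨_, rfl⟩
  obtain ⟨c0, hc0d⟩ : ∃ t : ℝ, uj p.1 - α 0 = t := ⟨_, rfl⟩
  obtain ⟨c1, hc1d⟩ : ∃ t : ℝ, uj p.1 - α 1 = t := ⟨_, rfl⟩
  obtain ⟨c2, hc2d⟩ : ∃ t : ℝ, uj p.1 - α 2 = t := ⟨_, rfl⟩
  obtain ⟨d0, hd0d⟩ : ∃ t : ℝ, fderiv ℝ uj p.1 (Pi.single 0 1) = t := ⟨_, rfl⟩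
  obtain ⟨d1, hd1d⟩ : ∃ t : ℝ, fderiv ℝ uj p.1 (Pi.single 1 1) = t := ⟨_, rfl⟩
  obtain ⟨d2, hd2d⟩ : ∃ t : ℝ, fderiv ℝ uj p.1 (Pi.single 2 1) = t := ⟨_, rfl⟩
  have hb0 : b0 ≠ 0 := hb0d ▸ hbne 0
  have hb1 : b1 ≠ 0 := hb1d ▸ hbne 1
  have hb2 : b2 ≠ 0 := hb2d ▸ hbne 2
  have hc0 : c0 ≠ 0 := hc0d ▸ hcne 0
  have hc1 : c1 ≠ 0 := hc1d ▸ hcne 1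
  have hc2 : c2 ≠ 0 := hc2d ▸ hcne 2
  rw [hb0d, hb1d, hb2d] at hrb
  rw [hc0d, hc1d, hc2d] at hrc
  simp only [hc0d, hc1d, hc2d, hd0d, hd1d, hd2d] at himp
  -- the quantity `D`
  have hDpos : 0 < p.1 0 ^ 2 / c0 ^ 2 + p.1 1 ^ 2 / c1 ^ 2 + p.1 2 ^ 2 / c2 ^ 2 := by
    have h0 : 0 < p.1 0 ^ 2 / c0 ^ 2 :=
      div_pos (sq_pos_of_ne_zero (hxne 0)) (sq_pos_of_ne_zero hc0)
    have h1 : 0 < p.1 1 ^ 2 / c1 ^ 2 :=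
      div_pos (sq_pos_of_ne_zero (hxne 1)) (sq_pos_of_ne_zero hc1)
    have h2 : 0 < p.1 2 ^ 2 / c2 ^ 2 :=
      div_pos (sq_pos_of_ne_zero (hxne 2)) (sq_pos_of_ne_zero hc2)
    linarith
  obtain ⟨Dv, hDv⟩ : ∃ D : ℝ,
      p.1 0 ^ 2 / c0 ^ 2 + p.1 1 ^ 2 / c1 ^ 2 + p.1 2 ^ 2 / c2 ^ 2 = D := ⟨_, rfl⟩
  rw [hDv] at hDpos
  have hDne : Dv ≠ 0 := ne_of_gt hDpos
  rw [hDv] at himp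
  have himp0 : d0 = 2 * p.1 0 / (c0 * Dv) := by
    rw [eq_div_iff (mul_ne_zero hc0 hDne)]
    have h := himp 0
    rw [hc0d, hd0d] at h
    rw [div_eq_iff hc0] at h
    linear_combination -h
  have himp1 : d1 = 2 * p.1 1 / (c1 * Dv) := by
    rw [eq_div_iff (mul_ne_zero hc1 hDne)]
    have h := himp 1
    rw [hc1d, hd1d] at h
    rw [div_eq_iff hc1] at h
    linear_combination -h
  have himp2 : d2 = 2 * p.1 2 / (c2 * Dv) := by
    rw [eq_div_iff (mul_ne_zero hc2 hDne)]
    have h := himp 2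
    rw [hc2d, hd2d] at h
    rw [div_eq_iff hc2] at h
    linear_combination -h
  -- expand the bracket
  simp only [liePoisson, Fin.sum_univ_three, hdJu, hdXu, hdJpi]
  norm_num [eps, cross, Pi.single_apply, Fin.sum_univ_three]
  simp only [Fin.isValue, show ((2:Fin 3) = 0) = False by simp, show ((2:Fin 3) = 1) = False by simp,
    show ((1:Fin 3) = 0) = False by simp, show ((0:Fin 3) = 2) = False by simp,
    show ((1:Fin 3) = 2) = False by simp, show ((0:Fin 3) = 1) = False by simp, if_false, if_true]
  rw [hb0d, hb1d, hb2d, hd0d, hd1d, hd2d]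
  trans (1 / (2 * a ^ 2) * ((p.1 0 ^ 2 + p.1 1 ^ 2 + p.1 2 ^ 2) *
      (p.1 0 * d0 / b0 + p.1 1 * d1 / b1 + p.1 2 * d2 / b2) -
    (p.1 0 * d0 + p.1 1 * d1 + p.1 2 * d2) *
      (p.1 0 ^ 2 / b0 + p.1 1 ^ 2 / b1 + p.1 2 ^ 2 / b2)))
  · field_simp
    simp only [Matrix.cons_val]
    ring
  rw [hrb, hsph', mul_zero, sub_zero]
  rw [himp0, himp1, himp2]
  by_cases heq : ui p.1 = uj p.1
  · rw [if_pos heq]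
    have e0 : b0 = c0 := by rw [← hb0d, ← hc0d, heq]
    have e1 : b1 = c1 := by rw [← hb1d, ← hc1d, heq]
    have e2 : b2 = c2 := by rw [← hb2d, ← hc2d, heq]
    rw [e0, e1, e2]
    have hDvP : p.1 0 ^ 2 * (c1 ^ 2 * c2 ^ 2) + p.1 1 ^ 2 * (c0 ^ 2 * c2 ^ 2) +
        p.1 2 ^ 2 * (c0 ^ 2 * c1 ^ 2) = Dv * (c0 ^ 2 * c1 ^ 2 * c2 ^ 2) := by
      rw [← hDv]
      field_simp
    field_simp
    linear_combination hDvP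
  · rw [if_neg heq]
    have hsub : ui p.1 - uj p.1 ≠ 0 := sub_ne_zero.mpr heq
    have hbc0 : b0 = c0 + (ui p.1 - uj p.1) := by rw [← hb0d, ← hc0d]; ring
    have hbc1 : b1 = c1 + (ui p.1 - uj p.1) := by rw [← hb1d, ← hc1d]; ring
    have hbc2 : b2 = c2 + (ui p.1 - uj p.1) := by rw [← hb2d, ← hc2d]; ring
    have hkey : (ui p.1 - uj p.1) *
        (p.1 0 ^ 2 / (b0 * c0) + p.1 1 ^ 2 / (b1 * c1) + p.1 2 ^ 2 / (b2 * c2)) =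
        (p.1 0 ^ 2 / c0 + p.1 1 ^ 2 / c1 + p.1 2 ^ 2 / c2) -
        (p.1 0 ^ 2 / b0 + p.1 1 ^ 2 / b1 + p.1 2 ^ 2 / b2) := by
      have hb0' : c0 + (ui p.1 - uj p.1) ≠ 0 := hbc0 ▸ hb0
      have hb1' : c1 + (ui p.1 - uj p.1) ≠ 0 := hbc1 ▸ hb1
      have hb2' : c2 + (ui p.1 - uj p.1) ≠ 0 := hbc2 ▸ hb2
      rw [hbc0, hbc1, hbc2]
      field_simp
      ring
    rw [hrb, hrc, sub_zero] at hkey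
    have hN := (mul_eq_zero.mp hkey).resolve_left hsub
    trans ((p.1 0 ^ 2 / (b0 * c0) + p.1 1 ^ 2 / (b1 * c1) + p.1 2 ^ 2 / (b2 * c2)) / Dv)
    · field_simp
    rw [hN, zero_div]

/-- Let `V ⊆ {x : x₁x₂x₃ ≠ 0}` be open and let
`u₁, u₂ : V → ℝ` be `C¹` elliptic coordinates on `V` (roots of
`Σ_j x_j²/(u_i − α_j) = 0` with `α₁ < u₁ < α₂ < u₂ < α₃`).  Then, viewing
`u₁, u₂` as functions on `V × ℝ³` independent of `J`, one has `{u₁, u₂} = 0` on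
`V × ℝ³`, and `{π_i⁰, u_j} = δ_{ij}` at every `(x,J) ∈ V × ℝ³` with
`|x|² = a²`, where `π_i⁰ = (1/(2a²)) Σ_j x_j (x ∧ J)_j/(u_i(x) − α_j)`. -/
theorem elliptic_darboux_uu_piu (α : Fin 3 → ℝ) (h01 : α 0 < α 1)
    (h12 : α 1 < α 2) (a : ℝ) (ha : 0 < a)
    (V : Set (Fin 3 → ℝ)) (hV : IsOpen V)
    (hVsub : ∀ x ∈ V, x 0 * x 1 * x 2 ≠ 0)
    (u : Fin 2 → (Fin 3 → ℝ) → ℝ)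
    (hu : ∀ i, ContDiffOn ℝ 1 (u i) V)
    (hrange : ∀ x ∈ V,
      α 0 < u 0 x ∧ u 0 x < α 1 ∧ α 1 < u 1 x ∧ u 1 x < α 2)
    (hroot : ∀ x ∈ V, ∀ i : Fin 2, ∑ j, (x j) ^ 2 / (u i x - α j) = 0) :
    (∀ p : E3, p.1 ∈ V →
      liePoisson (fun q => u 0 q.1) (fun q => u 1 q.1) p = 0) ∧
    (∀ p : E3, p.1 ∈ V → ∑ j, (p.1 j) ^ 2 = a ^ 2 → ∀ i j : Fin 2,
      liePoisson (pi0 α a (u i)) (fun q => u j q.1) p =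
        if i = j then 1 else 0) := by
  have hdiff : ∀ (i : Fin 2) (p : E3), p.1 ∈ V → DifferentiableAt ℝ (u i) p.1 :=
    fun i p hp =>
      (((hu i).differentiableOn one_ne_zero).differentiableAt (hV.mem_nhds hp))
  constructor
  · intro p hp
    simp [liePoisson, dJ_fstComp (u 0) p (hdiff 0 p hp), dJ_fstComp (u 1) p (hdiff 1 p hp)]
  · intro p hp hsph i j
    have hr := hrange p.1 hp
    have hxne : ∀ m : Fin 3, p.1 m ≠ 0 := by
      have h := hVsub p.1 hp
      intro m
      fin_cases m <;>
        simp only [Fin.zero_eta, Fin.mk_one, show (⟨2, by norm_num⟩ : Fin 3) = 2 from rfl] <;>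
        · intro hm
          apply h
          rw [hm]
          ring
    have hne' : ∀ (t : Fin 2) (m : Fin 3), u t p.1 - α m ≠ 0 := by
      intro t m
      fin_cases t <;> fin_cases m <;>
        simp only [Fin.zero_eta, Fin.mk_one, show (⟨2, by norm_num⟩ : Fin 3) = 2 from rfl] <;>
        · rw [sub_ne_zero]
          intro hh
          linarith [hr.1, hr.2.1, hr.2.2.1, hr.2.2.2]
    have h := main_aux α a (ne_of_gt ha) V hV (u i) (u j) p hp (hdiff i p hp)
      (hdiff j p hp) (hne' i) (hne' j) hxne (hroot p.1 hp i)
      (fun y hy => hroot y hy j) hsph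
    rw [h]
    by_cases hij : i = j
    · subst hij
      simp
    · rw [if_neg hij, if_neg ?_]
      fin_cases i <;> fin_cases j <;>
        simp only [Fin.zero_eta, Fin.mk_one] at hij ⊢
      · exact absurd trivial hij
      · intro hh; linarith [hr.2.1, hr.2.2.1]
      · intro hh; linarith [hr.2.1, hr.2.2.1]
      · exact absurd trivial hij
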